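/- arXiv:2110.08846 — 3 statements merged into one kernel-verified Lean document; each statement's English description precedes it below -/
import Mathlib

section
/- Let φ : (0,∞) → (0,∞) be increasing and suppose that ψ(r) := r²/φ(r)² is increasing in r > 0. Let K > 0 and γ > 0, and suppose r₀ > 0 satisfies ψ(r₀) = 2Kγ. Then for every r > 0, K·φ(r)²/γ − r²/(2γ²) ≤ K·φ(r₀)²/γ. (Consequently, sup_{r>0} { K·φ(r)²/γ − r²/(2γ²) } ≤ K·(φ∘ψ⁻¹)²(2Kγ)/γ.) -/
/-- If `φ : (0,∞) → (0,∞)` is increasing, `ψ(r) := r²/φ(r)²` is increasing on `(0,∞)`,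
`K, γ > 0` and `r₀ > 0` satisfies `ψ(r₀) = 2Kγ`, then for every `r > 0`,
`K·φ(r)²/γ − r²/(2γ²) ≤ K·φ(r₀)²/γ`. -/
theorem stmt0 (φ : ℝ → ℝ) (hφpos : ∀ r > 0, 0 < φ r)
    (hφmono : MonotoneOn φ (Set.Ioi 0))
    (hψmono : MonotoneOn (fun r => r ^ 2 / (φ r) ^ 2) (Set.Ioi 0))
    (K γ r₀ : ℝ) (hK : 0 < K) (hγ : 0 < γ) (hr₀ : 0 < r₀)
    (hψr₀ : r₀ ^ 2 / (φ r₀) ^ 2 = 2 * K * γ) :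
    ∀ r > 0, K * (φ r) ^ 2 / γ - r ^ 2 / (2 * γ ^ 2) ≤ K * (φ r₀) ^ 2 / γ := by
  intro r hr
  have hφr := hφpos r hr
  have hφr₀ := hφpos r₀ hr₀
  rcases le_total r r₀ with h | h
  · have hle : φ r ≤ φ r₀ := hφmono hr hr₀ h
    have h1 : K * (φ r) ^ 2 / γ ≤ K * (φ r₀) ^ 2 / γ := by
      apply div_le_div_of_nonneg_right _ hγ.le |>.trans_eq rfl
      · nlinarith [sq_nonneg (φ r), sq_nonneg (φ r₀), mul_le_mul hle hle hφr.le hφr₀.le]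
    have h2 : 0 ≤ r ^ 2 / (2 * γ ^ 2) := by positivity
    linarith
  · have hψ : 2 * K * γ ≤ r ^ 2 / (φ r) ^ 2 := by
      have := hψmono (Set.mem_Ioi.mpr hr₀) (Set.mem_Ioi.mpr hr) h
      simpa [hψr₀] using this
    have hr2 : 2 * K * γ * (φ r) ^ 2 ≤ r ^ 2 := by
      have := (le_div_iff₀ (by positivity : (0:ℝ) < (φ r)^2)).mp hψ
      linarith
    have hlhs : K * (φ r) ^ 2 / γ - r ^ 2 / (2 * γ ^ 2) ≤ 0 := by
      have h1 : K * (φ r) ^ 2 / γ ≤ r ^ 2 / (2 * γ ^ 2) := by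
        rw [div_le_div_iff₀ hγ (by positivity)]
        nlinarith
      linarith
    have : 0 ≤ K * (φ r₀) ^ 2 / γ := by positivity
    linarith
end

section
/- Let φ : (0,∞) → (0,∞) be increasing and suppose ψ(r) := r²/φ(r)² is a strictly increasing continuous bijection of (0,∞) onto (0,∞), with inverse ψ⁻¹. Assume the improper integral ∫₀¹ (φ(ψ⁻¹(s)))²/s ds is finite. Fix K > 0 and T > 0, and for t ∈ (0,T] define γ_t(s) = (1 − e^{K(s−t)})/K for s ∈ [0,t]. Then sup_{t∈(0,T]} ∫₀ᵗ (φ(ψ⁻¹(2K·γ_t(s))))²/γ_t(s) ds < ∞. -/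
open MeasureTheory
open scoped ENNReal

/-- Let `φ : (0,∞) → (0,∞)` be increasing, `ψ(r) := r²/φ(r)²` a strictly increasing continuous
bijection of `(0,∞)` onto itself with inverse `ψinv`, and assume
`∫₀¹ (φ(ψ⁻¹ s))²/s ds < ∞`. Then, with `γ_t(s) = (1 − e^{K(s−t)})/K`,
`sup_{t ∈ (0,T]} ∫₀ᵗ (φ(ψ⁻¹(2Kγ_t(s))))²/γ_t(s) ds < ∞`. -/
theorem stmt3 (φ ψinv : ℝ → ℝ)
    (hφpos : ∀ r > 0, 0 < φ r) (hφmono : MonotoneOn φ (Set.Ioi 0))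
    (hψmono : StrictMonoOn (fun r => r ^ 2 / (φ r) ^ 2) (Set.Ioi 0))
    (hψcont : ContinuousOn (fun r => r ^ 2 / (φ r) ^ 2) (Set.Ioi 0))
    (hψbij : Set.BijOn (fun r => r ^ 2 / (φ r) ^ 2) (Set.Ioi 0) (Set.Ioi 0))
    (hinv1 : ∀ r > 0, ψinv (r ^ 2 / (φ r) ^ 2) = r)
    (hinv2 : ∀ s > 0, (ψinv s) ^ 2 / (φ (ψinv s)) ^ 2 = s)
    (hinvpos : ∀ s > 0, 0 < ψinv s)
    (hint : ∫⁻ s in Set.Ioc (0 : ℝ) 1, ENNReal.ofReal ((φ (ψinv s)) ^ 2 / s) < ⊤)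
    (K T : ℝ) (hK : 0 < K) (hT : 0 < T) :
    ∃ C : ℝ, ∀ t ∈ Set.Ioc (0 : ℝ) T,
      ∫⁻ s in Set.Ioc (0 : ℝ) t,
        ENNReal.ofReal
          ((φ (ψinv (2 * K * ((1 - Real.exp (K * (s - t))) / K)))) ^ 2 /
            ((1 - Real.exp (K * (s - t))) / K)) ≤ ENNReal.ofReal C := by
  have h2K : (0:ℝ) < 2 * K := by positivity
  set H : ℝ → ℝ := fun v => if 0 < v then (φ (ψinv v)) ^ 2 else 0 with hH
  have hHnonneg : ∀ v, 0 ≤ H v := by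
    intro v; simp only [hH]; split <;> positivity
  have hinvmono : ∀ a b : ℝ, 0 < a → a ≤ b → ψinv a ≤ ψinv b := by
    intro a b ha hab
    by_contra hlt
    push_neg at hlt
    have hb : 0 < b := ha.trans_le hab
    have := hψmono (Set.mem_Ioi.2 (hinvpos b hb)) (Set.mem_Ioi.2 (hinvpos a ha)) hlt
    simp only [hinv2 a ha, hinv2 b hb] at this
    exact absurd hab (not_le.2 this)
  have hHmono : Monotone H := by
    intro a b hab
    simp only [hH]
    split_ifs with ha hb hb
    · have hb' : 0 < b := ha.trans_le hab
      have h1 : ψinv a ≤ ψinv b := hinvmono a b ha hab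
      have h2 : φ (ψinv a) ≤ φ (ψinv b) :=
        hφmono (Set.mem_Ioi.2 (hinvpos a ha)) (Set.mem_Ioi.2 (hinvpos b hb')) h1
      exact pow_le_pow_left₀ (le_of_lt (hφpos _ (hinvpos a ha))) h2 2
    · exact absurd (ha.trans_le hab) hb
    · positivity
    · exact le_refl _
  have hHmeas : Measurable H := hHmono.measurable
  set g : ℝ → ℝ≥0∞ := fun v => ENNReal.ofReal (H v / v) with hg
  have hgmeas : Measurable g := (hHmeas.div measurable_id).ennreal_ofReal
  set g2 : ℝ → ℝ≥0∞ := fun u => ENNReal.ofReal (H (2 * K * u) / u) with hg2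
  have hg2meas : Measurable g2 :=
    ((hHmeas.comp (measurable_const_mul (2 * K))).div measurable_id).ennreal_ofReal
  set M : ℝ := max 1 (2 * K * T) with hM
  -- finiteness of ∫ g over (0, M]
  have IM : ∫⁻ v in Set.Ioc (0:ℝ) M, g v < ⊤ := by
    have hsplit : Set.Ioc (0:ℝ) M = Set.Ioc 0 1 ∪ Set.Ioc 1 M :=
      (Set.Ioc_union_Ioc_eq_Ioc (by norm_num) (le_max_left 1 _)).symm
    rw [hsplit, lintegral_union measurableSet_Ioc (Set.Ioc_disjoint_Ioc_of_le le_rfl)]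
    refine ENNReal.add_lt_top.2 ⟨?_, ?_⟩
    · have heq : ∀ v ∈ Set.Ioc (0:ℝ) 1, g v = ENNReal.ofReal ((φ (ψinv v)) ^ 2 / v) := by
        intro v hv
        simp only [hg, hH, if_pos hv.1]
      rw [setLIntegral_congr_fun_ae measurableSet_Ioc (Filter.Eventually.of_forall heq)]
      exact hint
    · have hb : ∀ v ∈ Set.Ioc (1:ℝ) M, g v ≤ ENNReal.ofReal (H M) := by
        intro v hv
        have h1 : H v / v ≤ H v := div_le_self (hHnonneg v) hv.1.le
        exact ENNReal.ofReal_le_ofReal (h1.trans (hHmono hv.2))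
      calc ∫⁻ v in Set.Ioc (1:ℝ) M, g v
          ≤ ∫⁻ _ in Set.Ioc (1:ℝ) M, ENNReal.ofReal (H M) := setLIntegral_mono measurable_const hb
        _ = ENNReal.ofReal (H M) * volume (Set.Ioc (1:ℝ) M) := by
            rw [setLIntegral_const]
        _ < ⊤ := ENNReal.mul_lt_top ENNReal.ofReal_lt_top (by simp [Real.volume_Ioc])
  -- scaling identity
  have hg2int : ∫⁻ u in Set.Ioc (0:ℝ) T, g2 u = ∫⁻ v in Set.Ioc (0:ℝ) (2 * K * T), g v := by
    have heq : ∀ u ∈ Set.Ioc (0:ℝ) T, g2 u = ENNReal.ofReal (2 * K) * g (2 * K * u) := by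
      intro u hu
      simp only [hg2, hg]
      rw [← ENNReal.ofReal_mul h2K.le]
      congr 1
      have hu0 : u ≠ 0 := ne_of_gt hu.1
      field_simp
    rw [setLIntegral_congr_fun_ae measurableSet_Ioc (Filter.Eventually.of_forall heq),
      lintegral_const_mul _
        (show Measurable (fun u : ℝ => g (2 * K * u)) from
          hgmeas.comp (measurable_const_mul (2 * K)))]
    have hmap := Real.map_volume_mul_left (ne_of_gt h2K)
    have hsm := setLIntegral_map (μ := volume)
      (measurableSet_Ioc : MeasurableSet (Set.Ioc (0:ℝ) (2 * K * T)))
      hgmeas (measurable_const_mul (2 * K))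
    rw [hmap, Measure.restrict_smul, lintegral_smul_measure, smul_eq_mul,
      Set.preimage_const_mul_Ioc₀ _ _ h2K, zero_div,
      mul_div_cancel_left₀ _ (ne_of_gt h2K)] at hsm
    rw [← hsm, ← mul_assoc, ← ENNReal.ofReal_mul h2K.le, abs_of_pos (by positivity),
      mul_inv_cancel₀ (ne_of_gt h2K), ENNReal.ofReal_one, one_mul]
  set B : ℝ≥0∞ := ENNReal.ofReal (Real.exp (K * T)) * ∫⁻ v in Set.Ioc (0:ℝ) M, g v with hB
  have hBne : B ≠ ⊤ := ENNReal.mul_ne_top ENNReal.ofReal_ne_top IM.ne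
  refine ⟨B.toReal, fun t ht => ?_⟩
  rw [ENNReal.ofReal_toReal hBne]
  -- pointwise bound
  have hpt : ∀ s ∈ Set.Ioc (0:ℝ) t,
      ENNReal.ofReal
          ((φ (ψinv (2 * K * ((1 - Real.exp (K * (s - t))) / K)))) ^ 2 /
            ((1 - Real.exp (K * (s - t))) / K))
        ≤ ENNReal.ofReal (Real.exp (K * T)) * g2 (t - s) := by
    intro s hs
    rcases hs.2.eq_or_lt with heq | hst
    · subst heq
      simp [Real.exp_zero]
    · set γ : ℝ := (1 - Real.exp (K * (s - t))) / K with hγ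
      have hx : 0 < t - s := sub_pos.2 hst
      have hexp_lt : Real.exp (K * (s - t)) < 1 := by
        have : K * (s - t) < 0 := mul_neg_of_pos_of_neg hK (by linarith)
        exact Real.exp_lt_one_iff.mpr this
      have hγpos : 0 < γ := div_pos (by linarith) hK
      have hflip : K * (s - t) = -(K * (t - s)) := by ring
      have hupper : γ ≤ t - s := by
        rw [hγ, div_le_iff₀ hK, hflip]
        have h1 := Real.add_one_le_exp (-(K * (t - s)))
        nlinarith
      have hlower : Real.exp (-(K * T)) * (t - s) ≤ γ := by
        have h3 : (1 + K * (t - s)) * Real.exp (-(K * (t - s))) ≤ 1 := by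
          calc (1 + K * (t - s)) * Real.exp (-(K * (t - s)))
              ≤ Real.exp (K * (t - s)) * Real.exp (-(K * (t - s))) :=
                mul_le_mul_of_nonneg_right
                  (by linarith [Real.add_one_le_exp (K * (t - s))]) (Real.exp_pos _).le
            _ = 1 := by rw [← Real.exp_add]; simp
        have h6 : K * (t - s) * Real.exp (-(K * (t - s))) ≤ 1 - Real.exp (-(K * (t - s))) := by
          nlinarith
        have h7 : Real.exp (-(K * T)) ≤ Real.exp (-(K * (t - s))) := by
          apply Real.exp_le_exp.2
          have : t - s ≤ T := by linarith [ht.2, hs.1]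
          nlinarith
        have h8 : Real.exp (-(K * T)) * ((t - s) * K) ≤
            Real.exp (-(K * (t - s))) * ((t - s) * K) :=
          mul_le_mul_of_nonneg_right h7 (by positivity)
        rw [hγ, hflip, le_div_iff₀ hK]
        nlinarith [h6, h8]
      have hnum : (φ (ψinv (2 * K * γ))) ^ 2 ≤ H (2 * K * (t - s)) := by
        have h1 : 0 < 2 * K * γ := by positivity
        have h2 : 2 * K * γ ≤ 2 * K * (t - s) := by nlinarith
        have h3 := hHmono h2
        simpa only [hH, if_pos h1] using h3
      have hden : (φ (ψinv (2 * K * γ))) ^ 2 / γ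
          ≤ Real.exp (K * T) * (H (2 * K * (t - s)) / (t - s)) := by
        have hlow' : 0 < Real.exp (-(K * T)) * (t - s) := by positivity
        calc (φ (ψinv (2 * K * γ))) ^ 2 / γ
            ≤ H (2 * K * (t - s)) / γ := by gcongr
          _ ≤ H (2 * K * (t - s)) / (Real.exp (-(K * T)) * (t - s)) := by
              gcongr
          _ = Real.exp (K * T) * (H (2 * K * (t - s)) / (t - s)) := by
              rw [Real.exp_neg]
              field_simp
      calc ENNReal.ofReal ((φ (ψinv (2 * K * γ))) ^ 2 / γ)
          ≤ ENNReal.ofReal (Real.exp (K * T) * (H (2 * K * (t - s)) / (t - s))) :=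
            ENNReal.ofReal_le_ofReal hden
        _ = ENNReal.ofReal (Real.exp (K * T)) * g2 (t - s) := by
            rw [ENNReal.ofReal_mul (Real.exp_nonneg _)]
  -- substitution
  have hsub : ∫⁻ s in Set.Ioc (0:ℝ) t, g2 (t - s) = ∫⁻ u in Set.Ico (0:ℝ) t, g2 u := by
    have hemb : MeasurableEmbedding (fun s : ℝ => t - s) :=
      (MeasurableEquiv.subLeft t).measurableEmbedding
    have hmp : MeasurePreserving (fun s : ℝ => t - s) volume volume :=
      Measure.measurePreserving_sub_left volume t
    have h := hmp.setLIntegral_comp_emb hemb g2 (Set.Ioc 0 t)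
    rwa [Set.image_const_sub_Ioc, sub_zero, sub_self] at h
  have hstep4 : ∫⁻ u in Set.Ico (0:ℝ) t, g2 u ≤ ∫⁻ u in Set.Ioc (0:ℝ) T, g2 u := by
    calc ∫⁻ u in Set.Ico (0:ℝ) t, g2 u
        ≤ ∫⁻ u in Set.Icc (0:ℝ) T, g2 u :=
          lintegral_mono_set (fun x hx => ⟨hx.1, hx.2.le.trans ht.2⟩)
      _ = ∫⁻ u in Set.Ioc (0:ℝ) T, g2 u := (setLIntegral_congr Ioc_ae_eq_Icc).symm
  calc ∫⁻ s in Set.Ioc (0:ℝ) t,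
        ENNReal.ofReal
          ((φ (ψinv (2 * K * ((1 - Real.exp (K * (s - t))) / K)))) ^ 2 /
            ((1 - Real.exp (K * (s - t))) / K))
      ≤ ∫⁻ s in Set.Ioc (0:ℝ) t, ENNReal.ofReal (Real.exp (K * T)) * g2 (t - s) :=
        setLIntegral_mono
          (measurable_const.mul (hg2meas.comp (measurable_const.sub measurable_id))) hpt
    _ = ENNReal.ofReal (Real.exp (K * T)) * ∫⁻ s in Set.Ioc (0:ℝ) t, g2 (t - s) :=
        lintegral_const_mul _ (hg2meas.comp (measurable_const.sub measurable_id))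
    _ = ENNReal.ofReal (Real.exp (K * T)) * ∫⁻ u in Set.Ico (0:ℝ) t, g2 u := by rw [hsub]
    _ ≤ ENNReal.ofReal (Real.exp (K * T)) * ∫⁻ u in Set.Ioc (0:ℝ) T, g2 u :=
        mul_le_mul_right hstep4 _
    _ = ENNReal.ofReal (Real.exp (K * T)) * ∫⁻ v in Set.Ioc (0:ℝ) (2 * K * T), g v := by
        rw [hg2int]
    _ ≤ B := mul_le_mul_right (lintegral_mono_set (Set.Ioc_subset_Ioc_right (le_max_right _ _))) _
end

section
/- Let K, c', T > 0. There exists a constant c > 0 such that for all t ∈ (0,T] and all w > 0, min{4, 2c'w²/t} + 2K·∫₀ᵗ min{4, 2c'w²/s}·e^{2K(t−s)} ds ≤ c·( t⁻¹ − log(min{1, w}) )·w². -/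
open MeasureTheory Real Set

/-- Integrability of the integrand on subintervals of `[0,t]`. -/
lemma stmt11_aux_ii (a K t u v : ℝ) (hK : 0 ≤ K) (ha : 0 < a) (hu : 0 ≤ u)
    (huv : u ≤ v) (hvt : v ≤ t) :
    IntervalIntegrable (fun s => min 4 (a / s) * Real.exp (2 * K * (t - s)))
      volume u v := by
  have hmeas : Measurable (fun s : ℝ => min 4 (a / s) * Real.exp (2 * K * (t - s))) := by
    apply Measurable.mul
    · exact Measurable.min measurable_const (measurable_const.div measurable_id)
    · exact (Real.continuous_exp.comp (by continuity)).measurable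
  apply IntervalIntegrable.mono_fun
    (intervalIntegrable_const (c := 4 * Real.exp (2 * K * t)))
    (hmeas.aestronglyMeasurable)
  rw [Set.uIoc_of_le huv]
  filter_upwards [ae_restrict_mem measurableSet_Ioc] with s hs
  have hs0 : 0 < s := lt_of_le_of_lt hu hs.1
  have hst : s ≤ t := le_trans hs.2 hvt
  have h1 : 0 ≤ min 4 (a / s) := le_min (by norm_num) (le_of_lt (div_pos ha hs0))
  have h2 : min 4 (a / s) ≤ 4 := min_le_left _ _
  have h3 : Real.exp (2 * K * (t - s)) ≤ Real.exp (2 * K * t) := by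
    apply Real.exp_le_exp.mpr
    nlinarith
  have h4 : (0:ℝ) < Real.exp (2 * K * (t - s)) := Real.exp_pos _
  rw [Real.norm_eq_abs, Real.norm_eq_abs, abs_of_nonneg (by positivity),
    abs_of_nonneg (by positivity)]
  nlinarith

/-- Constant bound for the integral. -/
lemma stmt11_aux_bd1 (a K t u v : ℝ) (hK : 0 ≤ K) (ha : 0 < a) (hu : 0 ≤ u)
    (huv : u ≤ v) (hvt : v ≤ t) :
    (∫ s in u..v, min 4 (a / s) * Real.exp (2 * K * (t - s)))
      ≤ 4 * Real.exp (2 * K * t) * (v - u) := by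
  have h := intervalIntegral.integral_mono_on (μ := volume) huv
    (stmt11_aux_ii a K t u v hK ha hu huv hvt)
    (intervalIntegrable_const (c := 4 * Real.exp (2 * K * t)))
    (fun s hs => by
      have hs0 : 0 ≤ s := le_trans hu hs.1
      have hst : s ≤ t := le_trans hs.2 hvt
      have h2 : min 4 (a / s) ≤ 4 := min_le_left _ _
      have h3 : Real.exp (2 * K * (t - s)) ≤ Real.exp (2 * K * t) := by
        apply Real.exp_le_exp.mpr; nlinarith
      have h1 : 0 ≤ min 4 (a / s) := by
        rcases eq_or_lt_of_le hs0 with h | h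
        · simp [← h]
        · exact le_min (by norm_num) (le_of_lt (div_pos ha h))
      nlinarith [Real.exp_pos (2 * K * (t - s))])
  rw [intervalIntegral.integral_const, smul_eq_mul] at h
  linarith

/-- Logarithmic bound for the integral away from `0`. -/
lemma stmt11_aux_bd2 (a K t u v : ℝ) (hK : 0 ≤ K) (ha : 0 < a) (hu : 0 < u)
    (huv : u ≤ v) (hvt : v ≤ t) :
    (∫ s in u..v, min 4 (a / s) * Real.exp (2 * K * (t - s)))
      ≤ Real.exp (2 * K * t) * a * (Real.log v - Real.log u) := by
  have hv0 : 0 < v := lt_of_lt_of_le hu huv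
  have hcont : ContinuousOn (fun s : ℝ => Real.exp (2 * K * t) * a * s⁻¹)
      (Set.uIcc u v) := by
    rw [Set.uIcc_of_le huv]
    apply ContinuousOn.mul continuousOn_const
    apply ContinuousOn.inv₀ continuousOn_id
    exact fun x hx => ne_of_gt (lt_of_lt_of_le hu hx.1)
  have h := intervalIntegral.integral_mono_on (μ := volume) huv
    (stmt11_aux_ii a K t u v hK ha hu.le huv hvt)
    hcont.intervalIntegrable
    (fun s hs => by
      have hs0 : 0 < s := lt_of_lt_of_le hu hs.1
      have hst : s ≤ t := le_trans hs.2 hvt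
      have h2 : min 4 (a / s) ≤ a / s := min_le_right _ _
      have h3 : Real.exp (2 * K * (t - s)) ≤ Real.exp (2 * K * t) := by
        apply Real.exp_le_exp.mpr; nlinarith
      have h1 : 0 ≤ min 4 (a / s) := le_min (by norm_num) (le_of_lt (div_pos ha hs0))
      have has : a / s = a * s⁻¹ := div_eq_mul_inv a s
      nlinarith [Real.exp_pos (2 * K * (t - s)), div_pos ha hs0])
  have h' : (∫ s in u..v, Real.exp (2 * K * t) * a * s⁻¹)
      = Real.exp (2 * K * t) * a * (Real.log v - Real.log u) := by
    rw [intervalIntegral.integral_const_mul, integral_inv_of_pos hu hv0,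
      Real.log_div hv0.ne' hu.ne']
  linarith [h.trans_eq h']

set_option maxHeartbeats 1000000 in
/-- For `K, c', T > 0` there is `c > 0` such that for all `t ∈ (0,T]` and `w > 0`:
`min{4, 2c'w²/t} + 2K ∫₀ᵗ min{4, 2c'w²/s} e^{2K(t−s)} ds ≤ c (t⁻¹ − log(1 ∧ w)) w²`. -/
theorem stmt11 (K c' T : ℝ) (hK : 0 < K) (hc' : 0 < c') (hT : 0 < T) :
    ∃ c > (0 : ℝ), ∀ t ∈ Set.Ioc (0 : ℝ) T, ∀ w > (0 : ℝ),
      min 4 (2 * c' * w ^ 2 / t) +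
        2 * K * ∫ s in (0 : ℝ)..t, min 4 (2 * c' * w ^ 2 / s) * Real.exp (2 * K * (t - s))
      ≤ c * (t⁻¹ - Real.log (min 1 w)) * w ^ 2 := by
  obtain ⟨E, hE⟩ : ∃ E : ℝ, E = Real.exp (2 * K * T) := ⟨_, rfl⟩
  have hE1 : (1:ℝ) ≤ E := hE ▸ Real.one_le_exp (by positivity)
  obtain ⟨D, hD⟩ : ∃ D : ℝ, D = |Real.log (2 * T / c')| := ⟨_, rfl⟩
  have hD0 : 0 ≤ D := hD ▸ abs_nonneg _
  obtain ⟨C0, hC0⟩ : ∃ C0 : ℝ, C0 = 1 + D := ⟨_, rfl⟩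
  have hC0pos : (0:ℝ) < C0 := by rw [hC0]; linarith
  refine ⟨2 * c' + 4 * K * c' * E * (C0 * T + 2) + 4 * K * c' * E * T, by positivity, ?_⟩
  rintro t ⟨ht0, htT⟩ w hw
  obtain ⟨a, ha⟩ : ∃ a : ℝ, a = 2 * c' * w ^ 2 := ⟨_, rfl⟩
  have ha0 : 0 < a := by rw [ha]; positivity
  obtain ⟨L, hL⟩ : ∃ L : ℝ, L = -Real.log (min 1 w) := ⟨_, rfl⟩
  have hLnn : 0 ≤ L := by
    have : Real.log (min 1 w) ≤ 0 :=
      Real.log_nonpos (le_of_lt (lt_min one_pos hw)) (min_le_left _ _)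
    rw [hL]; linarith
  rw [← ha, show t⁻¹ - Real.log (min 1 w) = t⁻¹ + L by rw [hL]; ring]
  obtain ⟨I, hIdef⟩ : ∃ I : ℝ,
      I = ∫ s in (0:ℝ)..t, min 4 (a / s) * Real.exp (2 * K * (t - s)) := ⟨_, rfl⟩
  rw [← hIdef]
  obtain ⟨m, hm⟩ : ∃ m : ℝ, m = min 4 (a / t) := ⟨_, rfl⟩
  rw [← hm]
  have htinv : (0:ℝ) < t⁻¹ := by positivity
  have hTt : T⁻¹ ≤ t⁻¹ := inv_anti₀ ht0 htT
  have h1T : (1:ℝ) ≤ T * t⁻¹ := by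
    have := mul_le_mul_of_nonneg_left hTt hT.le
    rwa [mul_inv_cancel₀ hT.ne'] at this
  have hexp_le : Real.exp (2 * K * t) ≤ E := by
    rw [hE]; exact Real.exp_le_exp.mpr (by nlinarith)
  have hexpt : (0:ℝ) < Real.exp (2 * K * t) := Real.exp_pos _
  have hfirst : m ≤ 2 * c' * t⁻¹ * w ^ 2 := by
    have hat : a / t = 2 * c' * t⁻¹ * w ^ 2 := by
      rw [ha, div_eq_mul_inv]; ring
    rw [hm, ← hat]; exact min_le_right _ _
  by_cases hcase : t ≤ a / 4
  · -- Case 1: t ≤ a/4, bound integrand by constant.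
    have hI : I ≤ 4 * Real.exp (2 * K * t) * t := by
      have := stmt11_aux_bd1 a K t 0 t hK.le ha0 le_rfl ht0.le le_rfl
      rw [← hIdef] at this; linarith
    clear hIdef hm
    have hA : 4 * Real.exp (2 * K * t) * t ≤ E * a := by
      have := mul_le_mul hexp_le (show 4 * t ≤ a by linarith) (by linarith) (by linarith)
      nlinarith
    have hB : E * a ≤ 2 * c' * E * T * t⁻¹ * w ^ 2 := by
      rw [ha]
      nlinarith [mul_le_mul_of_nonneg_left h1T
        (show (0:ℝ) ≤ 2 * c' * E * w ^ 2 by positivity)]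
    have hmain : 2 * K * I ≤ 4 * K * c' * E * T * t⁻¹ * w ^ 2 := by
      have hch : I ≤ 2 * c' * E * T * t⁻¹ * w ^ 2 := by linarith
      nlinarith [mul_le_mul_of_nonneg_left hch (show (0:ℝ) ≤ 2 * K by linarith)]
    have hrest1 : 0 ≤ 4 * K * c' * E * (C0 * T + 2) * (t⁻¹ + L) * w ^ 2 :=
      mul_nonneg (mul_nonneg
        (show (0:ℝ) ≤ 4 * K * c' * E * (C0 * T + 2) by positivity)
        (by linarith)) (sq_nonneg w)
    have hrest2 : 0 ≤ (2 * c' + 4 * K * c' * E * T) * L * w ^ 2 :=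
      mul_nonneg (mul_nonneg
        (show (0:ℝ) ≤ 2 * c' + 4 * K * c' * E * T by positivity) hLnn) (sq_nonneg w)
    linarith only [hfirst, hmain, hrest1, hrest2]
  · -- Case 2: a/4 < t, split the integral at a/4.
    push_neg at hcase
    have hr0 : 0 < a / 4 := by linarith
    have hrt : a / 4 ≤ t := hcase.le
    have hsplit : I = (∫ s in (0:ℝ)..(a / 4), min 4 (a / s) * Real.exp (2 * K * (t - s)))
          + (∫ s in (a / 4)..t, min 4 (a / s) * Real.exp (2 * K * (t - s))) := by
      rw [hIdef]
      exact (intervalIntegral.integral_add_adjacent_intervals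
        (stmt11_aux_ii a K t 0 (a / 4) hK.le ha0 le_rfl hr0.le hrt)
        (stmt11_aux_ii a K t (a / 4) t hK.le ha0 hr0.le hrt le_rfl)).symm
    have hb1 : (∫ s in (0:ℝ)..(a / 4), min 4 (a / s) * Real.exp (2 * K * (t - s)))
        ≤ E * a := by
      have := stmt11_aux_bd1 a K t 0 (a / 4) hK.le ha0 le_rfl hr0.le hrt
      nlinarith
    have hb2 : (∫ s in (a / 4)..t, min 4 (a / s) * Real.exp (2 * K * (t - s)))
        ≤ Real.exp (2 * K * t) * a * (Real.log t - Real.log (a / 4)) :=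
      stmt11_aux_bd2 a K t (a / 4) t hK.le ha0 hr0 hrt le_rfl
    clear hIdef hm
    -- log estimate
    have hlogmin : Real.log (min 1 w) ≤ Real.log w :=
      Real.log_le_log (lt_min one_pos hw) (min_le_right _ _)
    have hlogr : Real.log (a / 4) = Real.log (2 * c') + 2 * Real.log w - Real.log 4 := by
      rw [ha, Real.log_div (by positivity) (by norm_num),
        Real.log_mul (by positivity) (by positivity), Real.log_pow]
      push_cast; ring
    have hlogT : Real.log t ≤ Real.log T := Real.log_le_log ht0 htT
    have hlogD : Real.log T + Real.log 4 - Real.log (2 * c') ≤ D := by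
      have heq : Real.log T + Real.log 4 - Real.log (2 * c') = Real.log (2 * T / c') := by
        rw [Real.log_div (by positivity) hc'.ne', Real.log_mul (by norm_num) hT.ne',
          Real.log_mul (by norm_num) hc'.ne']
        have h4 : Real.log 4 = Real.log 2 + Real.log 2 := by
          rw [← Real.log_mul (by norm_num) (by norm_num)]; norm_num
        linarith
      rw [heq, hD]
      exact le_abs_self _
    have hlog : Real.log t - Real.log (a / 4) ≤ D + 2 * L := by
      rw [hlogr, hL]
      have : -2 * Real.log w ≤ -2 * Real.log (min 1 w) := by linarith
      linarith
    have hlogrt : 0 ≤ Real.log t - Real.log (a / 4) := by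
      have := Real.log_le_log hr0 hrt; linarith
    -- combine
    have hIbound : I ≤ E * a * (C0 + 2 * L) := by
      have hb2' : Real.exp (2 * K * t) * a * (Real.log t - Real.log (a / 4))
          ≤ E * a * (D + 2 * L) :=
        mul_le_mul (mul_le_mul_of_nonneg_right hexp_le ha0.le) hlog hlogrt
          (by positivity)
      rw [hsplit, hC0]
      linarith only [hb1, hb2, hb2']
    clear hb1 hb2
    have hC0bd : C0 + 2 * L ≤ (C0 * T + 2) * (t⁻¹ + L) := by
      nlinarith [mul_nonneg hC0pos.le (mul_nonneg hT.le hLnn),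
        mul_le_mul_of_nonneg_left h1T hC0pos.le]
    have hmain : 2 * K * I ≤ 4 * K * c' * E * (C0 * T + 2) * (t⁻¹ + L) * w ^ 2 := by
      have hstep1 : 2 * K * I ≤ 2 * K * (E * a * (C0 + 2 * L)) :=
        mul_le_mul_of_nonneg_left hIbound (by positivity)
      have hstep2 : 2 * K * (E * a * (C0 + 2 * L))
          ≤ 2 * K * (E * a * ((C0 * T + 2) * (t⁻¹ + L))) := by
        nlinarith [mul_le_mul_of_nonneg_left hC0bd
          (show (0:ℝ) ≤ 2 * K * (E * a) by positivity)]
      have hstep3 : 2 * K * (E * a * ((C0 * T + 2) * (t⁻¹ + L)))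
          = 4 * K * c' * E * (C0 * T + 2) * (t⁻¹ + L) * w ^ 2 := by
        rw [ha]; ring
      linarith
    have htail : 0 ≤ 4 * K * c' * E * T * (t⁻¹ + L) * w ^ 2 :=
      mul_nonneg (mul_nonneg (show (0:ℝ) ≤ 4 * K * c' * E * T by positivity)
        (by linarith)) (sq_nonneg w)
    have hmid : 0 ≤ 2 * c' * L * w ^ 2 := by positivity
    linarith only [hfirst, hmain, htail, hmid]
end
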